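/- Suppose (x*, r_c*, r_d*, SOC*) is a global minimizer of the period-2 problem P2, i.e., it minimizes C_o(Q) + Σ_{i=1}^N C_i(x_i) over all (x_1,...,x_N, r_c, r_d, SOC) satisfying x_i ∈ X_i for every user i, the storage constraints, and Q_t = b_t + Σ_{i=1}^N x_{i,t} + r_{c,t} − r_{d,t} for every t. Define the day-ahead prices p_t = 2·β_o·max(Q*_t − r_t^max, 0) for each time slot t, where Q* is the aggregate supply at the optimum. Then for every user i, the consumption x_i* is a global minimizer of the user's total cost Σ_{t=1}^T p_t·x_t + C_i(x) over x ∈ X_i. (Theorem 1: the pricing scheme p induces the socially optimal power consumption.) -/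
import Mathlib

lemma max_sq_add_le (a h : ℝ) : max (a + h) 0 ^ 2 ≤ max a 0 ^ 2 + 2 * max a 0 * h + h ^ 2 := by
  rcases le_total a 0 with ha | ha <;> rcases le_total (a + h) 0 with hah | hah <;>
    simp only [max_eq_left, max_eq_right, ha, hah] <;> nlinarith


noncomputable section

/-- Operator's cost `C_o(Q) = β_o · Σ_t (max(Q_t − r_t^max, 0))²`. -/
def Co (T : ℕ) (βo : ℝ) (rmax Q : Fin T → ℝ) : ℝ :=
  βo * ∑ t, (max (Q t - rmax t) 0) ^ 2

/-- User's discomfort cost `C_i(x) = β_i · Σ_t (x_t − y_{i,t})²`. -/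
def Ci (T : ℕ) (βi : ℝ) (y x : Fin T → ℝ) : ℝ :=
  βi * ∑ t, (x t - y t) ^ 2

/-- A user's feasible set `X_i`. -/
def userFeas (T : ℕ) (dlo dhi : Fin T → ℝ) (Dtot : ℝ) : Set (Fin T → ℝ) :=
  {x | (∀ t, dlo t ≤ x t ∧ x t ≤ dhi t) ∧ ∑ t, x t = Dtot}

/-- The storage constraints (5)-(9). -/
def storageFeas (T : ℕ) (αe ηc ηd rcmax rdmax SOCmin SOCmax : ℝ)
    (rc rd : Fin T → ℝ) (SOC : Fin (T + 1) → ℝ) : Prop :=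
  (∀ t, 0 ≤ rc t ∧ rc t ≤ αe * rcmax) ∧
  (∀ t, 0 ≤ rd t ∧ rd t ≤ αe * rdmax) ∧
  (∀ t : Fin T, SOC t.succ = SOC t.castSucc + ηc * rc t / αe - rd t / (ηd * αe)) ∧
  (∀ t : Fin (T + 1), SOCmin ≤ SOC t ∧ SOC t ≤ SOCmax) ∧
  SOC 0 = SOC (Fin.last T)

/-- Theorem 1: the day-ahead prices `p_t = 2 β_o max(Q*_t − r_t^max, 0)` induce the
socially optimal power consumption: each user's socially optimal consumption `x_i*`
globally minimizes that user's own total cost `Σ_t p_t x_t + C_i(x)` over `X_i`. -/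
theorem optimal_pricing_induces_social_optimum
    (T N : ℕ) (hT : 1 ≤ T) (hN : 1 ≤ N)
    (βo : ℝ) (hβo : 0 ≤ βo)
    (ηs ηw : Fin T → ℝ) (hηs : ∀ t, 0 ≤ ηs t) (hηw : ∀ t, 0 ≤ ηw t)
    (αs αw : ℝ) (hαs : 0 ≤ αs) (hαw : 0 ≤ αw)
    (αe : ℝ) (hαe : 0 < αe)
    (ηc ηd : ℝ) (hηc : ηc ∈ Set.Icc (0 : ℝ) 1) (hηd : ηd ∈ Set.Ioc (0 : ℝ) 1)
    (rcmax rdmax : ℝ) (hrcmax : 0 < rcmax) (hrdmax : 0 < rdmax)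
    (SOCmin SOCmax : ℝ) (hSOCb : SOCmin ≤ SOCmax)
    (b : Fin T → ℝ)
    (β : Fin N → ℝ) (hβ : ∀ i, 0 ≤ β i)
    (y : Fin N → Fin T → ℝ)
    (dlo dhi : Fin N → Fin T → ℝ) (Dtot : Fin N → ℝ)
    (rmax : Fin T → ℝ) (hrmax : ∀ t, rmax t = ηs t * αs + ηw t * αw)
    (xstar : Fin N → Fin T → ℝ) (rcstar rdstar : Fin T → ℝ)
    (SOCstar : Fin (T + 1) → ℝ)
    (hxfeas : ∀ i, xstar i ∈ userFeas T (dlo i) (dhi i) (Dtot i))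
    (hstor : storageFeas T αe ηc ηd rcmax rdmax SOCmin SOCmax rcstar rdstar SOCstar)
    (Qstar : Fin T → ℝ)
    (hQstar : ∀ t, Qstar t = b t + (∑ i, xstar i t) + rcstar t - rdstar t)
    (hopt : ∀ (x : Fin N → Fin T → ℝ) (rc rd : Fin T → ℝ) (SOC : Fin (T + 1) → ℝ),
      (∀ i, x i ∈ userFeas T (dlo i) (dhi i) (Dtot i)) →
      storageFeas T αe ηc ηd rcmax rdmax SOCmin SOCmax rc rd SOC →
      Co T βo rmax Qstar + ∑ i, Ci T (β i) (y i) (xstar i) ≤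
        Co T βo rmax (fun t => b t + (∑ i, x i t) + rc t - rd t) +
          ∑ i, Ci T (β i) (y i) (x i))
    (p : Fin T → ℝ) (hp : ∀ t, p t = 2 * βo * max (Qstar t - rmax t) 0) :
    ∀ i, ∀ x ∈ userFeas T (dlo i) (dhi i) (Dtot i),
      (∑ t, p t * xstar i t) + Ci T (β i) (y i) (xstar i) ≤
        (∑ t, p t * x t) + Ci T (β i) (y i) x := by
  classical
  intro i x hx
  -- d is the deviation direction
  set d : Fin T → ℝ := fun t => x t - xstar i t with hdd
  set A : ℝ := (∑ t, p t * d t) + 2 * β i * ∑ t, (xstar i t - y i t) * d t with hAdef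
  set K : ℝ := (βo + β i) * ∑ t, d t ^ 2 with hKdef
  have hSd : (0:ℝ) ≤ ∑ t, d t ^ 2 := Finset.sum_nonneg fun t _ => sq_nonneg _
  have hKnn : 0 ≤ K := mul_nonneg (by linarith [hβ i]) hSd
  have key : ∀ ε : ℝ, 0 < ε → ε ≤ 1 → 0 ≤ A + ε * K := by
    intro ε hε0 hε1
    set xε : Fin N → Fin T → ℝ :=
      fun j t => xstar j t + if j = i then ε * d t else 0 with hxεdef
    have hxεi : ∀ t, xε i t = xstar i t + ε * d t := by
      intro t; simp [hxεdef]
    have hxεne : ∀ j, j ≠ i → xε j = xstar j := by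
      intro j hj; funext t; simp [hxεdef, hj]
    have hfeas : ∀ j, xε j ∈ userFeas T (dlo j) (dhi j) (Dtot j) := by
      intro j
      by_cases hji : j = i
      · subst hji
        constructor
        · intro t
          obtain ⟨h1, h2⟩ := (hxfeas j).1 t
          obtain ⟨h3, h4⟩ := hx.1 t
          rw [hxεi t]
          simp only [hdd]
          constructor
          · nlinarith [mul_nonneg (by linarith : (0:ℝ) ≤ 1 - ε)
                (by linarith : (0:ℝ) ≤ xstar j t - dlo j t),
              mul_nonneg hε0.le (by linarith : (0:ℝ) ≤ x t - dlo j t)]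
          · nlinarith [mul_nonneg (by linarith : (0:ℝ) ≤ 1 - ε)
                (by linarith : (0:ℝ) ≤ dhi j t - xstar j t),
              mul_nonneg hε0.le (by linarith : (0:ℝ) ≤ dhi j t - x t)]
        · have h1 := (hxfeas j).2
          have h2 := hx.2
          calc ∑ t, xε j t = ∑ t, (xstar j t + ε * d t) := by
                exact Finset.sum_congr rfl fun t _ => hxεi t
            _ = (∑ t, xstar j t) + ε * ((∑ t, x t) - ∑ t, xstar j t) := by
                rw [Finset.sum_add_distrib, ← Finset.mul_sum, ← Finset.sum_sub_distrib]
            _ = Dtot j := by rw [h1, h2]; ring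
      · rw [hxεne j hji]; exact hxfeas j
    have hmain := hopt xε rcstar rdstar SOCstar hfeas hstor
    -- rewrite the Q at the perturbed point
    have hsumx : ∀ t, (∑ j, xε j t) = (∑ j, xstar j t) + ε * d t := by
      intro t
      simp only [hxεdef]
      rw [Finset.sum_add_distrib, Finset.sum_ite_eq' Finset.univ i fun _ => ε * d t]
      simp
    have hQε : (fun t => b t + (∑ j, xε j t) + rcstar t - rdstar t)
        = fun t => Qstar t + ε * d t := by
      funext t; rw [hsumx t, hQstar t]; ring
    rw [hQε] at hmain
    -- split the Ci sum
    have hsumCi : ∑ j, Ci T (β j) (y j) (xε j)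
        = (∑ j, Ci T (β j) (y j) (xstar j))
          + (Ci T (β i) (y i) (xε i) - Ci T (β i) (y i) (xstar i)) := by
      have : ∀ j ∈ Finset.univ, Ci T (β j) (y j) (xε j)
          = Ci T (β j) (y j) (xstar j)
            + (if j = i then Ci T (β i) (y i) (xε i) - Ci T (β i) (y i) (xstar i) else 0) := by
        intro j _
        by_cases hji : j = i
        · subst hji; simp
        · rw [hxεne j hji]; simp [hji]
      rw [Finset.sum_congr rfl this, Finset.sum_add_distrib,
        Finset.sum_ite_eq' Finset.univ i]
      simp
    rw [hsumCi] at hmain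
    -- bound the operator cost at the perturbed point
    have hCo : Co T βo rmax (fun t => Qstar t + ε * d t)
        ≤ Co T βo rmax Qstar + ε * (∑ t, p t * d t) + ε ^ 2 * βo * ∑ t, d t ^ 2 := by
      have hterm : ∀ t : Fin T,
          max (Qstar t + ε * d t - rmax t) 0 ^ 2
            ≤ max (Qstar t - rmax t) 0 ^ 2 + 2 * max (Qstar t - rmax t) 0 * (ε * d t)
              + (ε * d t) ^ 2 := by
        intro t
        have h := max_sq_add_le (Qstar t - rmax t) (ε * d t)
        calc max (Qstar t + ε * d t - rmax t) 0 ^ 2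
            = max (Qstar t - rmax t + ε * d t) 0 ^ 2 := by ring_nf
          _ ≤ _ := h
      have hsum : ∑ t, max (Qstar t + ε * d t - rmax t) 0 ^ 2
          ≤ ∑ t, (max (Qstar t - rmax t) 0 ^ 2 + 2 * max (Qstar t - rmax t) 0 * (ε * d t)
              + (ε * d t) ^ 2) :=
        Finset.sum_le_sum fun t _ => hterm t
      have hmul := mul_le_mul_of_nonneg_left hsum hβo
      have e1 : ∀ t : Fin T,
          βo * (max (Qstar t - rmax t) 0 ^ 2 + 2 * max (Qstar t - rmax t) 0 * (ε * d t)
              + (ε * d t) ^ 2)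
            = βo * max (Qstar t - rmax t) 0 ^ 2 + ε * (p t * d t) + ε ^ 2 * βo * d t ^ 2 := by
        intro t; rw [hp t]; ring
      calc Co T βo rmax (fun t => Qstar t + ε * d t)
          = βo * ∑ t, max (Qstar t + ε * d t - rmax t) 0 ^ 2 := rfl
        _ ≤ βo * ∑ t, (max (Qstar t - rmax t) 0 ^ 2
              + 2 * max (Qstar t - rmax t) 0 * (ε * d t) + (ε * d t) ^ 2) := hmul
        _ = ∑ t, (βo * max (Qstar t - rmax t) 0 ^ 2 + ε * (p t * d t)
              + ε ^ 2 * βo * d t ^ 2) := by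
            rw [Finset.mul_sum]; exact Finset.sum_congr rfl fun t _ => e1 t
        _ = Co T βo rmax Qstar + ε * (∑ t, p t * d t) + ε ^ 2 * βo * ∑ t, d t ^ 2 := by
            rw [Finset.sum_add_distrib, Finset.sum_add_distrib, ← Finset.mul_sum,
              ← Finset.mul_sum, ← Finset.mul_sum]
            simp only [Co]
    -- exact expansion of the user's cost at the perturbed point
    have hCi : Ci T (β i) (y i) (xε i)
        = Ci T (β i) (y i) (xstar i) + ε * (2 * β i * ∑ t, (xstar i t - y i t) * d t)
          + ε ^ 2 * (β i * ∑ t, d t ^ 2) := by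
      have : ∀ t : Fin T, (xε i t - y i t) ^ 2
          = (xstar i t - y i t) ^ 2 + 2 * ε * ((xstar i t - y i t) * d t)
            + ε ^ 2 * d t ^ 2 := by
        intro t; rw [hxεi t]; ring
      simp only [Ci, Finset.sum_congr rfl fun t _ => this t, Finset.sum_add_distrib,
        ← Finset.mul_sum, mul_add]
      ring
    rw [hCi] at hmain
    have h0 : 0 ≤ ε * A + ε ^ 2 * K := by
      have expand : ε * A + ε ^ 2 * K
          = ε * (∑ t, p t * d t) + ε ^ 2 * βo * ∑ t, d t ^ 2
            + ε * (2 * β i * ∑ t, (xstar i t - y i t) * d t)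
            + ε ^ 2 * (β i * ∑ t, d t ^ 2) := by
        rw [hAdef, hKdef]; ring
      rw [expand]
      linarith [hmain, hCo]
    have h0' : ε * 0 ≤ ε * (A + ε * K) := by
      have hring : ε * (A + ε * K) = ε * A + ε ^ 2 * K := by ring
      linarith [h0]
    exact le_of_mul_le_mul_left h0' hε0
  -- conclude A ≥ 0 by letting ε → 0⁺
  have hA : 0 ≤ A := by
    by_contra hneg
    push_neg at hneg
    set ε : ℝ := min 1 (-A / (K + 1)) with hεdef
    have hK1 : (0:ℝ) < K + 1 := by linarith
    have hpos : 0 < -A / (K + 1) := div_pos (by linarith) hK1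
    have hε0 : 0 < ε := lt_min one_pos hpos
    have hε1 : ε ≤ 1 := min_le_left _ _
    have h := key ε hε0 hε1
    have hεle : ε ≤ -A / (K + 1) := min_le_right _ _
    have : ε * (K + 1) ≤ -A := (le_div_iff₀ hK1).mp hεle
    nlinarith
  -- finish: user's cost difference equals A + β i * Σ d² ≥ 0
  have hCix : Ci T (β i) (y i) x
      = Ci T (β i) (y i) (xstar i) + 2 * β i * (∑ t, (xstar i t - y i t) * d t)
        + β i * ∑ t, d t ^ 2 := by
    have : ∀ t : Fin T, (x t - y i t) ^ 2
        = (xstar i t - y i t) ^ 2 + 2 * ((xstar i t - y i t) * d t) + d t ^ 2 := by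
      intro t; simp only [hdd]; ring
    simp only [Ci, Finset.sum_congr rfl fun t _ => this t, Finset.sum_add_distrib,
      ← Finset.mul_sum, mul_add]
    ring
  have hpx : (∑ t, p t * x t) = (∑ t, p t * xstar i t) + ∑ t, p t * d t := by
    rw [← Finset.sum_add_distrib]
    refine Finset.sum_congr rfl fun t _ => ?_
    simp only [hdd]; ring
  have hβS : 0 ≤ β i * ∑ t, d t ^ 2 := mul_nonneg (hβ i) hSd
  rw [hCix, hpx]
  rw [hAdef] at hA
  linarith
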